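/- arXiv:1612.01755 — 2 statements merged into one kernel-verified Lean document; each statement's English description precedes it below -/
import Mathlib

section
/- Let A = [a(i,j)]_{i,j ∈ ℕ} be an infinite non-negative matrix which is bounded, i.e., a(i,j) ≥ 0 for all i, j and sup_{i,j} a(i,j) < ∞, and let T_A be the max-kernel operator on the positive cone C = l∞₊ defined by (T_A x)(i) = sup_{j ∈ ℕ} a(i,j)x(j). If t is a real number with sup{r_{e_j}(T_A) : j ∈ ℕ} ≤ t ≤ r(T_A), then t ∈ σ_ap(T_A). -/
open Filter Topology Bornology Pointwise

variable {X : Type*}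

section ConeDefs

variable [NormedAddCommGroup X] [NormedSpace ℝ X]

/-- `C` is a cone (with vertex `0`): `tC ⊆ C` for all `t ≥ 0`. -/
def IsCone (C : Set X) : Prop :=
  ∀ t : ℝ, 0 ≤ t → ∀ x ∈ C, t • x ∈ C

/-- `T` is positively homogeneous (of degree 1) on `C`. -/
def PosHomOn (C : Set X) (T : X → X) : Prop :=
  ∀ t : ℝ, 0 ≤ t → ∀ x ∈ C, T (t • x) = t • T x

/-- `T` is Lipschitz on `C`. -/
def LipschitzOnCone (C : Set X) (T : X → X) : Prop :=
  ∃ L : ℝ, 0 < L ∧ ∀ x ∈ C, ∀ y ∈ C, ‖T x - T y‖ ≤ L * ‖x - y‖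

/-- `T` is bounded on `C`: the set of ratios `‖T x‖/‖x‖` (over nonzero `x ∈ C`)
is bounded above. -/
def BoundedOnCone (C : Set X) (T : X → X) : Prop :=
  BddAbove {r : ℝ | ∃ x ∈ C, x ≠ 0 ∧ r = ‖T x‖ / ‖x‖}

/-- The norm `‖T‖ = sup {‖T x‖/‖x‖ : x ∈ C, x ≠ 0}` of `T` on the cone `C`. -/
noncomputable def coneNorm (C : Set X) (T : X → X) : ℝ :=
  sSup {r : ℝ | ∃ x ∈ C, x ≠ 0 ∧ r = ‖T x‖ / ‖x‖}

/-- The Bonsall cone spectral radius `r(T) = lim_n ‖Tⁿ‖^{1/n} = inf_n ‖Tⁿ‖^{1/n}`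
of `T` on the cone `C` (the limit exists and equals the infimum by submultiplicativity). -/
noncomputable def coneRadius (C : Set X) (T : X → X) : ℝ :=
  ⨅ n : ℕ, (coneNorm C (T^[n + 1])) ^ ((1 : ℝ) / (n + 1))

/-- The local cone spectral radius `r_x(T) = limsup_n ‖Tⁿ x‖^{1/n}`. -/
noncomputable def localRadius (C : Set X) (T : X → X) (x : X) : ℝ :=
  Filter.limsup (fun n : ℕ => ‖T^[n] x‖ ^ ((1 : ℝ) / n)) Filter.atTop

/-- The approximate point spectrum of `T` on the cone `C`: all `s ≥ 0` with
`inf {‖T x - s x‖ : x ∈ C, ‖x‖ = 1} = 0`. -/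
def apSpectrum (C : Set X) (T : X → X) : Set ℝ :=
  {s : ℝ | 0 ≤ s ∧ ∀ ε : ℝ, 0 < ε → ∃ x ∈ C, ‖x‖ = 1 ∧ ‖T x - s • x‖ < ε}

end ConeDefs

set_option maxHeartbeats 1000000

namespace Cor319

noncomputable abbrev LL := lp (fun _ : ℕ => ℝ) ⊤

variable {a : ℕ → ℕ → ℝ} {M : ℝ}
  {T : LL → LL}

section Basic
variable (ha0 : ∀ i j, 0 ≤ a i j) (haM : ∀ i j, a i j ≤ M)
  (hT : ∀ (x : LL) (i : ℕ), (T x) i = ⨆ j : ℕ, a i j * x j)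

include ha0 haM in
lemma bdd (x : LL) (i : ℕ) : BddAbove (Set.range fun j => a i j * x j) := by
  refine ⟨M * ‖x‖, ?_⟩
  rintro r ⟨j, rfl⟩
  calc a i j * x j ≤ |a i j * x j| := le_abs_self _
    _ = a i j * |x j| := by rw [abs_mul, abs_of_nonneg (ha0 i j)]
    _ ≤ M * ‖x‖ := by
        have h1 : |x j| ≤ ‖x‖ := lp.norm_apply_le_norm (by norm_num) x j
        have h2 : (0:ℝ) ≤ M := le_trans (ha0 0 0) (haM 0 0)
        exact mul_le_mul (haM i j) h1 (abs_nonneg _) h2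

include ha0 haM hT in
lemma T_nonneg {x : LL} (hx : ∀ j, 0 ≤ x j) (i : ℕ) : 0 ≤ (T x) i := by
  rw [hT]
  exact le_trans (mul_nonneg (ha0 i 0) (hx 0)) (le_ciSup (bdd ha0 haM x i) 0)

include ha0 haM hT in
lemma T_mono {x y : LL} (hxy : ∀ j, x j ≤ y j) (i : ℕ) : (T x) i ≤ (T y) i := by
  rw [hT, hT]
  exact ciSup_le fun j => le_trans (mul_le_mul_of_nonneg_left (hxy j) (ha0 i j))
    (le_ciSup (bdd ha0 haM y i) j)

include ha0 haM hT in
lemma T_smul {c : ℝ} (hc : 0 ≤ c) (x : LL) (i : ℕ) :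
    (T (c • x)) i = c * (T x) i := by
  rw [hT, hT, Real.mul_iSup_of_nonneg hc]
  congr 1; funext j
  rw [lp.coeFn_smul]; simp; ring

include ha0 haM hT in
lemma T_norm_le {x : LL} (hx : ∀ j, 0 ≤ x j) : ‖T x‖ ≤ M * ‖x‖ := by
  have h2 : (0:ℝ) ≤ M := le_trans (ha0 0 0) (haM 0 0)
  refine lp.norm_le_of_forall_le (mul_nonneg h2 (norm_nonneg x)) fun i => ?_
  rw [Real.norm_eq_abs, abs_of_nonneg (T_nonneg ha0 haM hT hx i), hT]
  refine ciSup_le fun j => ?_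
  have h1 : x j ≤ ‖x‖ := by
    have := lp.norm_apply_le_norm (show (⊤:ENNReal) ≠ 0 by norm_num) x j
    rwa [Real.norm_eq_abs, abs_of_nonneg (hx j)] at this
  exact mul_le_mul (haM i j) h1 (hx j) h2

include ha0 haM hT in
lemma iter_nonneg {x : LL} (hx : ∀ j, 0 ≤ x j) (k : ℕ) : ∀ i, 0 ≤ (T^[k] x) i := by
  induction k with
  | zero => simpa using hx
  | succ k ih =>
      intro i
      rw [Function.iterate_succ_apply']
      exact T_nonneg ha0 haM hT ih i

include ha0 haM hT in
lemma iter_mono {x y : LL} (hx : ∀ j, x j ≤ y j) (k : ℕ) : ∀ i, (T^[k] x) i ≤ (T^[k] y) i := by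
  induction k with
  | zero => simpa using hx
  | succ k ih =>
      intro i
      rw [Function.iterate_succ_apply', Function.iterate_succ_apply']
      exact T_mono ha0 haM hT ih i

include ha0 haM hT in
lemma iter_norm_le {x : LL} (hx : ∀ j, 0 ≤ x j) (k : ℕ) :
    ‖T^[k] x‖ ≤ (max M 1)^k * ‖x‖ := by
  induction k with
  | zero => rw [Function.iterate_zero_apply, pow_zero, one_mul]
  | succ k ih =>
      rw [Function.iterate_succ_apply']
      calc ‖T (T^[k] x)‖ ≤ M * ‖T^[k] x‖ :=
            T_norm_le ha0 haM hT (iter_nonneg ha0 haM hT hx k)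
        _ ≤ max M 1 * ((max M 1)^k * ‖x‖) := by
            refine mul_le_mul (le_max_left _ _) ih (norm_nonneg _) ?_
            exact le_trans zero_le_one (le_max_right _ _)
        _ = (max M 1)^(k+1) * ‖x‖ := by ring

-- norm of a nonnegative element is a sup of its entries
lemma norm_le_of_entries {x : LL} {B : ℝ} (hB : 0 ≤ B) (h : ∀ i, x i ≤ B)
    (hx : ∀ i, 0 ≤ x i) : ‖x‖ ≤ B :=
  lp.norm_le_of_forall_le hB fun i => by
    rw [Real.norm_eq_abs, abs_of_nonneg (hx i)]; exact h i

lemma entry_le_norm {x : LL} (hx : ∀ i, 0 ≤ x i) (i : ℕ) : x i ≤ ‖x‖ := by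
  have := lp.norm_apply_le_norm (show (⊤:ENNReal) ≠ 0 by norm_num) x i
  rwa [Real.norm_eq_abs, abs_of_nonneg (hx i)] at this

lemma exists_entry_gt {x : LL} {b : ℝ} (h : b < ‖x‖) : ∃ i, b < ‖x i‖ := by
  rw [lp.norm_eq_ciSup] at h
  exact exists_lt_of_lt_ciSup h

end Basic

section EBasic
variable {e : ℕ → LL} (he : ∀ j i : ℕ, (e j) i = if i = j then (1 : ℝ) else 0)

include he in
lemma e_nonneg (j i : ℕ) : 0 ≤ (e j) i := by
  rw [he]; split <;> norm_num

include he in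
lemma e_norm (j : ℕ) : ‖e j‖ = 1 := by
  refine le_antisymm (norm_le_of_entries zero_le_one (fun i => ?_) (e_nonneg he j)) ?_
  · rw [he]; split <;> norm_num
  · have := entry_le_norm (e_nonneg he j) j
    rwa [he, if_pos rfl] at this

include he in
lemma e_ne_zero (j : ℕ) : e j ≠ 0 := by
  intro h
  have := e_norm he j
  rw [h, norm_zero] at this
  norm_num at this

end EBasic

section Limsup

-- from a limsup bound get an eventual geometric bound, then a global one
lemma geom_of_limsup {c : ℕ → ℝ} {t s M₁ : ℝ} (hc0 : ∀ n, 0 ≤ c n)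
    (hcM : ∀ n, c n ≤ M₁ ^ n) (hM₁ : 1 ≤ M₁)
    (hlim : Filter.limsup (fun n : ℕ => (c n) ^ ((1 : ℝ) / n)) Filter.atTop ≤ t)
    (hts : t < s) (ht : 0 ≤ t) :
    ∃ B : ℝ, 1 ≤ B ∧ ∀ k, c k ≤ B * s ^ k := by
  set s₁ : ℝ := (t + s) / 2 with hs₁
  have hts₁ : t < s₁ := by rw [hs₁]; linarith
  have hs₁s : s₁ < s := by rw [hs₁]; linarith
  have hs₁0 : 0 < s₁ := lt_of_le_of_lt ht hts₁
  have hs0 : 0 < s := lt_trans hs₁0 hs₁s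
  have hM₁0 : (0:ℝ) < M₁ := lt_of_lt_of_le zero_lt_one hM₁
  have hub : ∀ n : ℕ, (c n) ^ ((1:ℝ)/n) ≤ M₁ := by
    intro n
    rcases Nat.eq_zero_or_pos n with rfl | hn
    · simp [Real.rpow_zero]; exact hM₁
    · calc (c n) ^ ((1:ℝ)/n) ≤ (M₁ ^ n) ^ ((1:ℝ)/n) :=
            Real.rpow_le_rpow (hc0 n) (hcM n) (by positivity)
        _ = M₁ := by
            rw [← Real.rpow_natCast M₁ n, ← Real.rpow_mul hM₁0.le]
            rw [mul_one_div, div_self (by exact_mod_cast hn.ne' : (n:ℝ) ≠ 0)]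
            exact Real.rpow_one _
  have hev : ∀ᶠ n in Filter.atTop, (c n) ^ ((1:ℝ)/n) < s₁ :=
    Filter.eventually_lt_of_limsup_lt (lt_of_le_of_lt hlim hts₁)
      (Filter.isBoundedUnder_of ⟨M₁, fun n => hub n⟩)
  obtain ⟨K, hK⟩ := Filter.eventually_atTop.1 hev
  set K₁ := K + 1 with hK₁
  have hgeom : ∀ n, K₁ ≤ n → c n ≤ s ^ n := by
    intro n hn
    have hn1 : 1 ≤ n := le_trans (by omega) hn
    have h1 : (c n) ^ ((1:ℝ)/n) < s₁ := hK n (by omega)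
    have h2 : c n = ((c n) ^ ((1:ℝ)/n)) ^ (n : ℕ) := by
      rw [← Real.rpow_natCast ((c n) ^ ((1:ℝ)/n)) n, ← Real.rpow_mul (hc0 n)]
      have hn0 : (n:ℝ) ≠ 0 := Nat.cast_ne_zero.2 (by omega)
      rw [one_div, inv_mul_cancel₀ hn0]
      exact (Real.rpow_one _).symm
    calc c n = ((c n) ^ ((1:ℝ)/n)) ^ (n:ℕ) := h2
      _ ≤ s₁ ^ n := pow_le_pow_left₀ (Real.rpow_nonneg (hc0 n) _) h1.le n
      _ ≤ s ^ n := pow_le_pow_left₀ hs₁0.le hs₁s.le n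
  set sm : ℝ := min s 1 with hsm
  have hsm0 : 0 < sm := lt_min hs0 zero_lt_one
  have hsm1 : sm ≤ 1 := min_le_right _ _
  refine ⟨max (M₁ ^ K₁ / sm ^ K₁) 1, le_max_right _ _, fun k => ?_⟩
  rcases le_or_gt K₁ k with hk | hk
  · calc c k ≤ s ^ k := hgeom k hk
      _ ≤ max (M₁ ^ K₁ / sm ^ K₁) 1 * s ^ k := by
          nth_rewrite 1 [← one_mul (s ^ k)]
          exact mul_le_mul_of_nonneg_right (le_max_right _ _) (pow_nonneg hs0.le k)
  · have h1 : c k ≤ M₁ ^ K₁ := le_trans (hcM k) (pow_le_pow_right₀ hM₁ hk.le)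
    have h2 : sm ^ K₁ ≤ s ^ k := by
      calc sm ^ K₁ ≤ sm ^ k := pow_le_pow_of_le_one hsm0.le hsm1 hk.le
        _ ≤ s ^ k := pow_le_pow_left₀ hsm0.le (min_le_left _ _) k
    calc c k ≤ M₁ ^ K₁ := h1
      _ = (M₁ ^ K₁ / sm ^ K₁) * sm ^ K₁ := (div_mul_cancel₀ _ (by positivity)).symm
      _ ≤ (M₁ ^ K₁ / sm ^ K₁) * s ^ k :=
          mul_le_mul_of_nonneg_left h2 (by positivity)
      _ ≤ max (M₁ ^ K₁ / sm ^ K₁) 1 * s ^ k :=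
          mul_le_mul_of_nonneg_right (le_max_left _ _) (by positivity)

end Limsup

lemma limsup_nonneg' {u : ℕ → ℝ} (h0 : ∀ n, 0 ≤ u n) {B : ℝ} (hB : ∀ n, u n ≤ B) :
    0 ≤ Filter.limsup u Filter.atTop :=
  Filter.le_limsup_of_frequently_le
    (Filter.Frequently.of_forall h0)
    (Filter.isBoundedUnder_of ⟨B, hB⟩)

section Path
variable (ha0 : ∀ i j, 0 ≤ a i j) (haM : ∀ i j, a i j ≤ M)
  (hT : ∀ (x : LL) (i : ℕ), (T x) i = ⨆ j : ℕ, a i j * x j)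

include ha0 haM hT in
lemma path_lemma (k : ℕ) (x : LL) (hx : ∀ j, 0 ≤ x j) :
    ∀ (i : ℕ) (b : ℝ), 0 ≤ b → b < (T^[k] x) i →
    ∃ l : ℕ → ℕ, l 0 = i ∧ b < (∏ m ∈ Finset.range k, a (l m) (l (m+1))) * x (l k) := by
  induction k with
  | zero =>
      intro i b _ hb
      exact ⟨fun _ => i, rfl, by simpa using hb⟩
  | succ k ih =>
      intro i b hb0 hb
      rw [Function.iterate_succ_apply', hT] at hb
      obtain ⟨j, hj⟩ := exists_lt_of_lt_ciSup hb
      have haij : 0 < a i j := by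
        by_contra h
        push_neg at h
        have : a i j = 0 := le_antisymm h (ha0 i j)
        rw [this, zero_mul] at hj
        exact absurd hj (not_lt.2 hb0)
      have h2 : b / a i j < (T^[k] x) j := (div_lt_iff₀ haij).2 (by linarith [mul_comm (a i j) ((T^[k] x) j)] )
      obtain ⟨l', hl'0, hl'⟩ := ih j (b / a i j) (div_nonneg hb0 haij.le) h2
      set l : ℕ → ℕ := fun m => if m = 0 then i else l' (m - 1) with hldef
      have hl0 : l 0 = i := rfl
      have hlsucc : ∀ m : ℕ, l (m + 1) = l' m := by
        intro m; simp [hldef]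
      refine ⟨l, hl0, ?_⟩
      have hprod : (∏ m ∈ Finset.range (k+1), a (l m) (l (m+1)))
          = a i j * (∏ m ∈ Finset.range k, a (l' m) (l' (m+1))) := by
        rw [Finset.prod_range_succ']
        rw [Finset.prod_congr rfl (fun m _ => by rw [hlsucc m, hlsucc (m+1)] :
          ∀ m ∈ Finset.range k, a (l (m+1)) (l (m+1+1)) = a (l' m) (l' (m+1)))]
        rw [hl0, hlsucc 0, hl'0, mul_comm]
      rw [hprod, hlsucc k]
      calc b = a i j * (b / a i j) := by field_simp
        _ < a i j * ((∏ m ∈ Finset.range k, a (l' m) (l' (m+1))) * x (l' k)) :=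
            mul_lt_mul_of_pos_left hl' haij
        _ = a i j * (∏ m ∈ Finset.range k, a (l' m) (l' (m+1))) * x (l' k) := by ring

end Path

section MoreAux

lemma rpow_base_le {c : ℕ → ℝ} {M₁ : ℝ} (hc0 : ∀ n, 0 ≤ c n)
    (hcM : ∀ n, c n ≤ M₁ ^ n) (hM₁ : 1 ≤ M₁) (n : ℕ) : (c n) ^ ((1:ℝ)/n) ≤ M₁ := by
  have hM₁0 : (0:ℝ) < M₁ := lt_of_lt_of_le zero_lt_one hM₁
  rcases Nat.eq_zero_or_pos n with rfl | hn
  · simp [Real.rpow_zero]; exact hM₁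
  · calc (c n) ^ ((1:ℝ)/n) ≤ (M₁ ^ n) ^ ((1:ℝ)/n) :=
        Real.rpow_le_rpow (hc0 n) (hcM n) (by positivity)
      _ = M₁ := by
        rw [← Real.rpow_natCast M₁ n, ← Real.rpow_mul hM₁0.le]
        rw [mul_one_div, div_self (by exact_mod_cast hn.ne' : (n:ℝ) ≠ 0)]
        exact Real.rpow_one _

lemma rpow_dip {c : ℕ → ℝ} {γ : ℝ} (hc0 : ∀ n, 0 ≤ c n) {n : ℕ} (hn : 1 ≤ n)
    (hrp : (c n) ^ ((1:ℝ)/n) < γ) (hγ : 0 ≤ γ) : c n < γ ^ n := by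
  have hn0 : (n:ℝ) ≠ 0 := Nat.cast_ne_zero.2 (by omega)
  have h2 : c n = ((c n) ^ ((1:ℝ)/n)) ^ (n : ℕ) := by
    rw [← Real.rpow_natCast ((c n) ^ ((1:ℝ)/n)) n, ← Real.rpow_mul (hc0 n)]
    rw [one_div, inv_mul_cancel₀ hn0]
    exact (Real.rpow_one _).symm
  rw [h2]
  exact pow_lt_pow_left₀ hrp (Real.rpow_nonneg (hc0 n) _) (by omega)

lemma rpow_cancel {c : ℝ} (hc : 0 ≤ c) (n : ℕ) :
    (c ^ ((1:ℝ)/((n:ℝ)+1))) ^ (n+1 : ℕ) = c := by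
  rw [← Real.rpow_natCast (c ^ ((1:ℝ)/((n:ℝ)+1))) (n+1), ← Real.rpow_mul hc]
  push_cast
  rw [one_div, inv_mul_cancel₀ (by positivity : ((n:ℝ)+1) ≠ 0), Real.rpow_one]

variable (ha0 : ∀ i j, 0 ≤ a i j) (haM : ∀ i j, a i j ≤ M)
  (hT : ∀ (x : LL) (i : ℕ), (T x) i = ⨆ j : ℕ, a i j * x j)

include ha0 haM hT in
lemma T_smul_lp {c : ℝ} (hc : 0 ≤ c) (x : LL) : T (c • x) = c • T x := by
  apply lp.ext
  funext i
  have h1 := T_smul ha0 haM hT hc x i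
  rw [lp.coeFn_smul]
  simpa using h1

end MoreAux


lemma main_pos {a : ℕ → ℕ → ℝ} {M₁ : ℝ} {T : LL → LL} {e : ℕ → LL} {t ε : ℝ}
    (ha0 : ∀ i j, 0 ≤ a i j) (haM : ∀ i j, a i j ≤ M₁) (hM₁1 : 1 ≤ M₁)
    (hT : ∀ (x : LL) (i : ℕ), (T x) i = ⨆ j : ℕ, a i j * x j)
    (he : ∀ j i : ℕ, (e j) i = if i = j then (1 : ℝ) else 0)
    (htpos : 0 < t)
    (hloc : ∀ j, Filter.limsup (fun n : ℕ => ‖T^[n] (e j)‖ ^ ((1:ℝ)/n)) Filter.atTop ≤ t)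
    (hpow : ∀ n : ℕ, ∃ x : LL, (∀ i, 0 ≤ x i) ∧ x ≠ 0 ∧ t^(n+1)/2 * ‖x‖ < ‖T^[n+1] x‖)
    (hε : 0 < ε) :
    ∃ x : LL, (∀ i, 0 ≤ x i) ∧ ‖x‖ = 1 ∧ ‖T x - t • x‖ < ε := by
  classical
  have heC : ∀ j i, 0 ≤ (e j) i := e_nonneg he
  have henorm : ∀ j, ‖e j‖ = 1 := e_norm he
  -- parameters
  obtain ⟨δ, hδdef⟩ : ∃ δ : ℝ, δ = min (ε/(4*(t+1))) (1/2) := ⟨_, rfl⟩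
  have hδ0 : 0 < δ := by rw [hδdef]; exact lt_min (by positivity) (by norm_num)
  have hδh : δ ≤ 1/2 := by rw [hδdef]; exact min_le_right _ _
  have hδ1 : δ < 1 := lt_of_le_of_lt hδh (by norm_num)
  obtain ⟨s, hsdef⟩ : ∃ s : ℝ, s = t * (1 + δ) := ⟨_, rfl⟩
  have hs0 : 0 < s := by nlinarith
  have hts : t < s := by nlinarith
  -- geometric bounds on columns
  have hcM : ∀ j k, ‖T^[k] (e j)‖ ≤ M₁ ^ k := by
    intro j k
    have h := iter_norm_le ha0 haM hT (fun i => heC j i) k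
    rwa [henorm j, mul_one, max_eq_left hM₁1] at h
  have hBex : ∀ j : ℕ, ∃ B : ℝ, 1 ≤ B ∧ ∀ k, ‖T^[k] (e j)‖ ≤ B * s ^ k := by
    intro j
    exact geom_of_limsup (fun n => norm_nonneg _) (hcM j) hM₁1 (hloc j) hts htpos.le
  choose B hB1 hBle using hBex
  -- choose N
  obtain ⟨N₀, hN₀⟩ := exists_pow_lt_of_lt_one (show (0:ℝ) < δ/2 by positivity)
    (show 1 - δ < 1 by linarith)
  set N : ℕ := N₀ + 1 with hNdef
  have hN1 : 1 ≤ N := by omega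
  have hN : (1-δ)^N ≤ δ/2 := by
    calc (1-δ)^N ≤ (1-δ)^N₀ := pow_le_pow_of_le_one (by linarith) (by linarith) (by omega)
      _ ≤ δ/2 := hN₀.le
  -- the path
  obtain ⟨x, hxC, hx0, hx⟩ := hpow N₀
  have hxn : 0 < ‖x‖ := norm_pos_iff.2 hx0
  have hb0 : (0:ℝ) ≤ t^N/2 * ‖x‖ := by positivity
  have hxN : t^N/2 * ‖x‖ < ‖T^[N] x‖ := hx
  obtain ⟨i₀, hi₀⟩ := exists_entry_gt hxN
  rw [Real.norm_eq_abs, abs_of_nonneg (iter_nonneg ha0 haM hT hxC N i₀)] at hi₀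
  obtain ⟨l, hl0, hl⟩ := path_lemma ha0 haM hT N x hxC i₀ _ hb0 hi₀
  set P : ℝ := ∏ m ∈ Finset.range N, a (l m) (l (m+1)) with hPdef
  have hP0 : 0 ≤ P := Finset.prod_nonneg fun m _ => ha0 _ _
  have hxlN : x (l N) ≤ ‖x‖ := entry_le_norm hxC _
  have htN : 0 < t^N/2 * ‖x‖ := by positivity
  have hxlN0 : 0 < x (l N) := by
    rcases lt_or_ge 0 (x (l N)) with h | h
    · exact h
    · have h1 : x (l N) = 0 := le_antisymm h (hxC _)
      rw [h1, mul_zero] at hl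
      linarith
  have hPt : t^N/2 < P := by
    have h1 : P * x (l N) ≤ P * ‖x‖ := mul_le_mul_of_nonneg_left hxlN hP0
    have h2 : t^N/2 * ‖x‖ < P * ‖x‖ := lt_of_lt_of_le hl h1
    exact lt_of_mul_lt_mul_right h2 hxn.le
  have hedge : ∀ m, m < N → 0 < a (l m) (l (m+1)) := by
    intro m hm
    rcases (ha0 (l m) (l (m+1))).lt_or_eq with h | h
    · exact h
    · exfalso
      have : P = 0 := Finset.prod_eq_zero (Finset.mem_range.2 hm) h.symm
      rw [this] at hPt
      have : 0 < t^N/2 := by positivity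
      linarith
  -- the vector v along the path
  have ht' : 0 < t * (1-δ) := by nlinarith
  set v : ℕ → ℝ := fun k => (t*(1-δ))^k / ∏ m ∈ Finset.range k, a (l m) (l (m+1)) with hvdef
  have hprod_pos : ∀ k, k ≤ N → 0 < ∏ m ∈ Finset.range k, a (l m) (l (m+1)) :=
    fun k hk => Finset.prod_pos fun m hm => hedge m (lt_of_lt_of_le (Finset.mem_range.1 hm) hk)
  have hv0 : v 0 = 1 := by simp [hvdef]
  have hvpos : ∀ k, k ≤ N → 0 < v k := fun k hk => div_pos (pow_pos ht' k) (hprod_pos k hk)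
  have hvrec : ∀ k, k < N → a (l k) (l (k+1)) * v (k+1) = (t*(1-δ)) * v k := by
    intro k hk
    have h1 : (0:ℝ) < ∏ m ∈ Finset.range k, a (l m) (l (m+1)) := hprod_pos k (by omega)
    have h2 : 0 < a (l k) (l (k+1)) := hedge k hk
    rw [hvdef]
    simp only
    rw [Finset.prod_range_succ, pow_succ]
    field_simp
  have hvN : v N ≤ δ := by
    have h1 : v N = (t*(1-δ))^N / P := rfl
    have h2 : (t*(1-δ))^N / P ≤ (t*(1-δ))^N / (t^N/2) := by
      apply div_le_div_of_nonneg_left (by positivity) (by positivity) hPt.le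
    have h3 : (t*(1-δ))^N / (t^N/2) = 2 * (1-δ)^N := by
      rw [mul_pow]
      field_simp
    rw [h1]
    calc (t*(1-δ))^N / P ≤ (t*(1-δ))^N / (t^N/2) := h2
      _ = 2*(1-δ)^N := h3
      _ ≤ 2*(δ/2) := by nlinarith
      _ = δ := by ring
  -- the seed vector u₀
  have hne : (Finset.range (N+1)).Nonempty := Finset.nonempty_range_add_one
  set u₀f : ℕ → ℝ := fun i => Finset.sup' (Finset.range (N+1)) hne
    (fun k => if l k = i then v k else 0) with hu₀def
  have hterm_nonneg : ∀ i k, k ∈ Finset.range (N+1) → 0 ≤ (if l k = i then v k else 0) := by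
    intro i k hk
    split
    · exact (hvpos k (by exact Nat.lt_succ_iff.1 (Finset.mem_range.1 hk))).le
    · exact le_refl 0
  have hu₀f_nonneg : ∀ i, 0 ≤ u₀f i := by
    intro i
    exact le_trans (hterm_nonneg i 0 (Finset.mem_range.2 (Nat.succ_pos N)))
      (Finset.le_sup' (fun k => if l k = i then v k else 0)
        (Finset.mem_range.2 (Nat.succ_pos N)))
  set Vmax : ℝ := Finset.sup' (Finset.range (N+1)) hne v with hVdef
  have hVmax1 : 1 ≤ Vmax := by
    rw [← hv0]
    exact Finset.le_sup' _ (Finset.mem_range.2 (by omega))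
  have hVmax0 : 0 ≤ Vmax := by linarith
  have hu₀f_le : ∀ i, u₀f i ≤ Vmax := by
    intro i
    refine Finset.sup'_le _ _ fun k hk => ?_
    split
    · exact Finset.le_sup' _ hk
    · linarith
  have hu₀mem : Memℓp u₀f ⊤ := memℓp_infty ⟨Vmax, by
    rintro r ⟨i, rfl⟩
    simp only [Real.norm_eq_abs]
    rw [abs_of_nonneg (hu₀f_nonneg i)]
    exact hu₀f_le i⟩
  set u₀ : LL := ⟨u₀f, hu₀mem⟩ with hu₀elem
  have hu₀app : ∀ i, u₀ i = u₀f i := fun _ => rfl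
  have hu₀C : ∀ i, 0 ≤ u₀ i := fun i => hu₀f_nonneg i
  have hu₀l : ∀ k, k ∈ Finset.range (N+1) → v k ≤ u₀ (l k) := by
    intro k hk
    rw [hu₀app]
    exact le_trans (le_of_eq (if_pos rfl).symm) (Finset.le_sup' (fun k' => if l k' = l k then v k' else 0) hk)
  have hu₀n1 : 1 ≤ ‖u₀‖ := by
    calc (1:ℝ) = v 0 := hv0.symm
      _ ≤ u₀ (l 0) := hu₀l 0 (Finset.mem_range.2 (by omega))
      _ ≤ ‖u₀‖ := entry_le_norm hu₀C (l 0)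
  have hu₀norm0 : 0 ≤ ‖u₀‖ := norm_nonneg _
  -- the deficit estimate for the seed
  have hdef : ∀ i, s * u₀ i ≤ (T u₀) i + 2*t*δ*‖u₀‖ := by
    intro i
    have hTnn : 0 ≤ (T u₀) i := T_nonneg ha0 haM hT hu₀C i
    have h2tδ : 0 ≤ 2*t*δ*‖u₀‖ := by positivity
    obtain ⟨k₀, hk₀mem, hk₀⟩ := Finset.exists_mem_eq_sup' hne
      (fun k => if l k = i then v k else 0)
    have hu₀i : u₀ i = if l k₀ = i then v k₀ else 0 := hk₀
    by_cases hli : l k₀ = i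
    · rw [if_pos hli] at hu₀i
      have hk₀N : k₀ ≤ N := Nat.lt_succ_iff.1 (Finset.mem_range.1 hk₀mem)
      have hvk₀norm : v k₀ ≤ ‖u₀‖ := by
        rw [← hu₀i]
        exact entry_le_norm hu₀C i
      rcases lt_or_eq_of_le hk₀N with hk | hk
      · -- k₀ < N
        have h1 : a i (l (k₀+1)) * u₀ (l (k₀+1)) ≤ (T u₀) i := by
          rw [hT]
          exact le_ciSup (bdd ha0 haM u₀ i) (l (k₀+1))
        have h2 : a (l k₀) (l (k₀+1)) * v (k₀+1) ≤ a i (l (k₀+1)) * u₀ (l (k₀+1)) := by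
          rw [← hli]
          exact mul_le_mul_of_nonneg_left (hu₀l (k₀+1) (Finset.mem_range.2 (by omega))) (ha0 _ _)
        have h3 := hvrec k₀ hk
        have h4 : (t*(1-δ)) * v k₀ ≤ (T u₀) i := by
          rw [← h3]; exact le_trans h2 h1
        have h5 : s * v k₀ - (t*(1-δ))*v k₀ = 2*t*δ*v k₀ := by rw [hsdef]; ring
        have h6 : 2*t*δ*v k₀ ≤ 2*t*δ*‖u₀‖ := by
          apply mul_le_mul_of_nonneg_left hvk₀norm (by positivity)
        rw [hu₀i]
        linarith
      · -- k₀ = N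
        have h1 : s * v k₀ ≤ s * δ := by
          apply mul_le_mul_of_nonneg_left _ hs0.le
          rw [hk]; exact hvN
        have h2 : s * δ ≤ 2*t*δ := by
          have : s ≤ 2*t := by rw [hsdef]; nlinarith
          nlinarith
        have h3 : 2*t*δ ≤ 2*t*δ*‖u₀‖ := by nlinarith
        rw [hu₀i]
        linarith
    · rw [if_neg hli] at hu₀i
      rw [hu₀i, mul_zero]
      linarith
  -- uniform geometric bound on iterates of the seed
  set Bmax : ℝ := Finset.sup' (Finset.range (N+1)) hne (fun m => B (l m)) with hBmaxdef
  have hBmax1 : 1 ≤ Bmax :=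
    le_trans (hB1 (l 0)) (Finset.le_sup' (fun m => B (l m)) (Finset.mem_range.2 (Nat.succ_pos N)))
  have hBmax0 : 0 ≤ Bmax := by linarith
  have hitN : ∀ k i, (T^[k] u₀) i ≤
      Vmax * Finset.sup' (Finset.range (N+1)) hne (fun m => (T^[k] (e (l m))) i) := by
    intro k
    induction k with
    | zero =>
        intro i
        simp only [Function.iterate_zero_apply]
        have hrhs0 : 0 ≤ Finset.sup' (Finset.range (N+1)) hne (fun m => (e (l m)) i) :=
          le_trans (heC (l 0) i) (Finset.le_sup' (fun m => (e (l m)) i)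
            (Finset.mem_range.2 (Nat.succ_pos N)))
        show Finset.sup' (Finset.range (N+1)) hne (fun k => if l k = i then v k else 0) ≤ _
        refine Finset.sup'_le _ _ fun k hk => ?_
        by_cases hli : l k = i
        · rw [if_pos hli]
          have h1 : (e (l k)) i = 1 := by rw [he, if_pos hli.symm]
          calc v k ≤ Vmax := Finset.le_sup' v hk
            _ = Vmax * (e (l k)) i := by rw [h1, mul_one]
            _ ≤ Vmax * Finset.sup' (Finset.range (N+1)) hne (fun m => (e (l m)) i) :=
                mul_le_mul_of_nonneg_left (Finset.le_sup' (fun m => (e (l m)) i) hk) hVmax0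
        · rw [if_neg hli]
          positivity
    | succ k ih =>
        intro i
        rw [Function.iterate_succ_apply', hT]
        refine ciSup_le fun j => ?_
        obtain ⟨m₀, hm₀mem, hm₀eq⟩ := Finset.exists_mem_eq_sup' hne
          (fun m => (T^[k] (e (l m))) j)
        have h1 : a i j * (T^[k] u₀) j ≤ a i j *
            (Vmax * Finset.sup' (Finset.range (N+1)) hne (fun m => (T^[k] (e (l m))) j)) :=
          mul_le_mul_of_nonneg_left (ih j) (ha0 i j)
        have h2 : a i j * (T^[k] (e (l m₀))) j ≤ (T^[k+1] (e (l m₀))) i := by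
          rw [Function.iterate_succ_apply', hT]
          exact le_ciSup (bdd ha0 haM (T^[k] (e (l m₀))) i) j
        calc a i j * (T^[k] u₀) j
            ≤ a i j * (Vmax * Finset.sup' (Finset.range (N+1)) hne
                (fun m => (T^[k] (e (l m))) j)) := h1
          _ = Vmax * (a i j * (T^[k] (e (l m₀))) j) := by rw [hm₀eq]; ring
          _ ≤ Vmax * (T^[k+1] (e (l m₀))) i := mul_le_mul_of_nonneg_left h2 hVmax0
          _ ≤ Vmax * Finset.sup' (Finset.range (N+1)) hne
                (fun m => (T^[k+1] (e (l m))) i) :=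
              mul_le_mul_of_nonneg_left
                (Finset.le_sup' (fun m => (T^[k+1] (e (l m))) i) hm₀mem) hVmax0
  set CC : ℝ := Vmax * Bmax with hCCdef
  have hCC1 : 1 ≤ CC := by rw [hCCdef]; nlinarith
  have hub : ∀ k i, (T^[k] u₀) i ≤ CC * s ^ k := by
    intro k i
    refine le_trans (hitN k i) ?_
    have h1 : Finset.sup' (Finset.range (N+1)) hne (fun m => (T^[k] (e (l m))) i)
        ≤ Bmax * s^k := by
      refine Finset.sup'_le _ _ fun m hm => ?_
      calc (T^[k] (e (l m))) i ≤ ‖T^[k] (e (l m))‖ :=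
            entry_le_norm (iter_nonneg ha0 haM hT (heC (l m)) k) i
        _ ≤ B (l m) * s^k := hBle (l m) k
        _ ≤ Bmax * s^k := mul_le_mul_of_nonneg_right
              (Finset.le_sup' (fun m' => B (l m')) hm) (by positivity)
    calc Vmax * Finset.sup' (Finset.range (N+1)) hne (fun m => (T^[k] (e (l m))) i)
        ≤ Vmax * (Bmax * s^k) := mul_le_mul_of_nonneg_left h1 hVmax0
      _ = CC * s^k := by rw [hCCdef]; ring
  -- the vector u = sup_k s^{-k} T^k u₀
  set g : ℕ → ℕ → ℝ := fun i k => s⁻¹^k * (T^[k] u₀) i with hgdef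
  have hgapp : ∀ i k, g i k = s⁻¹^k * (T^[k] u₀) i := fun _ _ => rfl
  have hg_nonneg : ∀ i k, 0 ≤ g i k := fun i k =>
    mul_nonneg (by positivity) (iter_nonneg ha0 haM hT hu₀C k i)
  have hg_le : ∀ i k, g i k ≤ CC := by
    intro i k
    rw [hgapp]
    calc s⁻¹^k * (T^[k] u₀) i ≤ s⁻¹^k * (CC * s^k) :=
          mul_le_mul_of_nonneg_left (hub k i) (by positivity)
      _ = CC * (s⁻¹ * s)^k := by rw [mul_pow]; ring
      _ = CC := by rw [inv_mul_cancel₀ hs0.ne', one_pow, mul_one]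
  have hgbdd : ∀ i, BddAbove (Set.range (g i)) := fun i =>
    ⟨CC, by rintro r ⟨k, rfl⟩; exact hg_le i k⟩
  set uf : ℕ → ℝ := fun i => ⨆ k : ℕ, g i k with hufdef
  have hufapp : ∀ i, uf i = ⨆ k : ℕ, g i k := fun _ => rfl
  have huf_le : ∀ i, uf i ≤ CC := fun i => ciSup_le (hg_le i)
  have huf_ge : ∀ i k, g i k ≤ uf i := fun i k => le_ciSup (hgbdd i) k
  have hu₀uf : ∀ i, u₀ i ≤ uf i := by
    intro i
    have h1 : g i 0 = u₀ i := by
      rw [hgapp]; simp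
    rw [← h1]; exact huf_ge i 0
  have huf_nonneg : ∀ i, 0 ≤ uf i := fun i => le_trans (hu₀C i) (hu₀uf i)
  have hufmem : Memℓp uf ⊤ := memℓp_infty ⟨CC, by
    rintro r ⟨i, rfl⟩
    simp only [Real.norm_eq_abs]
    rw [abs_of_nonneg (huf_nonneg i)]
    exact huf_le i⟩
  set u : LL := ⟨uf, hufmem⟩ with huelem
  have huapp : ∀ i, u i = uf i := fun _ => rfl
  have huC : ∀ i, 0 ≤ u i := fun i => huf_nonneg i
  have hu₀u : ∀ i, u₀ i ≤ u i := fun i => hu₀uf i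
  have hu0un : ‖u₀‖ ≤ ‖u‖ := norm_le_of_entries (norm_nonneg u)
    (fun i => le_trans (hu₀u i) (entry_le_norm huC i)) hu₀C
  have hu1 : 1 ≤ ‖u‖ := le_trans hu₀n1 hu0un
  have hkey : ∀ k i, (T^[k] u₀) i ≤ s^k * u i := by
    intro k i
    have h1 : g i k ≤ u i := huf_ge i k
    have h2 : (T^[k] u₀) i = s^k * g i k := by
      rw [hgapp, ← mul_assoc, ← mul_pow, mul_inv_cancel₀ hs0.ne', one_pow, one_mul]
    rw [h2]
    exact mul_le_mul_of_nonneg_left h1 (by positivity)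
  -- T u ≤ s u
  have hTu_le : ∀ i, (T u) i ≤ s * u i := by
    intro i
    rw [hT]
    refine ciSup_le fun j => ?_
    have hexp : a i j * u j = ⨆ k : ℕ, a i j * g j k := by
      rw [huapp, hufapp]
      exact Real.mul_iSup_of_nonneg (ha0 i j) _
    rw [hexp]
    refine ciSup_le fun k => ?_
    have h1 : a i j * (T^[k] u₀) j ≤ (T^[k+1] u₀) i := by
      rw [Function.iterate_succ_apply', hT]
      exact le_ciSup (bdd ha0 haM (T^[k] u₀) i) j
    have h2 : g i (k+1) ≤ u i := huf_ge i (k+1)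
    have h3 : a i j * g j k = s * (s⁻¹^(k+1) * (a i j * (T^[k] u₀) j)) := by
      rw [hgapp, pow_succ]
      field_simp
    rw [h3]
    calc s * (s⁻¹^(k+1) * (a i j * (T^[k] u₀) j))
        ≤ s * (s⁻¹^(k+1) * (T^[k+1] u₀) i) := by
          refine mul_le_mul_of_nonneg_left (mul_le_mul_of_nonneg_left h1 (by positivity)) hs0.le
      _ = s * g i (k+1) := by rw [hgapp]
      _ ≤ s * u i := mul_le_mul_of_nonneg_left h2 hs0.le
  -- s u ≤ max (s u₀) (T u)
  have hTunn : ∀ i, 0 ≤ (T u) i := T_nonneg ha0 haM hT huC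
  have hsu_le : ∀ i, s * u i ≤ max (s * u₀ i) ((T u) i) := by
    intro i
    have h0 : u i ≤ max (u₀ i) (s⁻¹ * (T u) i) := by
      rw [huapp, hufapp]
      refine ciSup_le fun k => ?_
      cases k with
      | zero =>
          have : g i 0 = u₀ i := by rw [hgapp]; simp
          rw [this]
          exact le_max_left _ _
      | succ k =>
          have h1 : (T^[k+1] u₀) i ≤ s^k * (T u) i := by
            rw [Function.iterate_succ_apply', hT]
            refine ciSup_le fun j => ?_
            calc a i j * (T^[k] u₀) j ≤ a i j * (s^k * u j) :=
                  mul_le_mul_of_nonneg_left (hkey k j) (ha0 i j)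
              _ = s^k * (a i j * u j) := by ring
              _ ≤ s^k * (T u) i := by
                  refine mul_le_mul_of_nonneg_left ?_ (by positivity)
                  rw [hT]
                  exact le_ciSup (bdd ha0 haM u i) j
          have h2 : g i (k+1) ≤ s⁻¹^(k+1) * (s^k * (T u) i) :=
            mul_le_mul_of_nonneg_left h1 (by positivity)
          have h3 : s⁻¹^(k+1) * (s^k * (T u) i) = s⁻¹ * (T u) i := by
            rw [pow_succ]
            field_simp
            ring
            rw [← mul_pow, mul_inv_cancel₀ hs0.ne', one_pow, one_mul]
          exact le_trans h2 (le_trans (le_of_eq h3) (le_max_right _ _))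
    calc s * u i ≤ s * max (u₀ i) (s⁻¹ * (T u) i) := mul_le_mul_of_nonneg_left h0 hs0.le
      _ = max (s * u₀ i) (s * (s⁻¹ * (T u) i)) := mul_max_of_nonneg _ _ hs0.le
      _ = max (s * u₀ i) ((T u) i) := by rw [← mul_assoc, mul_inv_cancel₀ hs0.ne', one_mul]
  have hTmono : ∀ i, (T u₀) i ≤ (T u) i := T_mono ha0 haM hT hu₀u
  -- final pointwise bound
  have hfinal : ∀ i, |(T u) i - t * u i| ≤ 3*t*δ*‖u‖ := by
    intro i
    have h1 : (T u) i ≤ s * u i := hTu_le i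
    have h3 : s * u₀ i ≤ (T u) i + 2*t*δ*‖u₀‖ := le_trans (hdef i) (by linarith [hTmono i])
    have h4 : s * u i ≤ (T u) i + 2*t*δ*‖u₀‖ :=
      le_trans (hsu_le i) (max_le h3 (le_add_of_nonneg_right (by positivity)))
    have h5 : u i ≤ ‖u‖ := entry_le_norm huC i
    have h6 : 0 ≤ u i := huC i
    have h7 : 2*t*δ*‖u₀‖ ≤ 2*t*δ*‖u‖ := mul_le_mul_of_nonneg_left hu0un (by positivity)
    have h8 : t * u i ≤ s * u i := mul_le_mul_of_nonneg_right hts.le h6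
    have h9 : s * u i = t * u i + t*δ* u i := by rw [hsdef]; ring
    have h10 : t*δ*u i ≤ t*δ*‖u‖ := mul_le_mul_of_nonneg_left h5 (by positivity)
    have h11 : 0 ≤ t*δ*‖u‖ := by positivity
    rw [abs_le]
    constructor
    · linarith
    · linarith
  -- assemble the approximate eigenvector
  have hnu : 0 < ‖u‖ := lt_of_lt_of_le zero_lt_one hu1
  refine ⟨‖u‖⁻¹ • u, ?_, ?_, ?_⟩
  · intro i
    rw [lp.coeFn_smul, Pi.smul_apply, smul_eq_mul]
    exact mul_nonneg (by positivity) (huC i)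
  · rw [norm_smul, Real.norm_eq_abs, abs_of_nonneg (by positivity : (0:ℝ) ≤ ‖u‖⁻¹),
      inv_mul_cancel₀ hnu.ne']
  · have hTx : T (‖u‖⁻¹ • u) = ‖u‖⁻¹ • (T u) :=
      T_smul_lp ha0 haM hT (by positivity) u
    have hsm : t • (‖u‖⁻¹ • u) = ‖u‖⁻¹ • (t • u) := smul_comm t ‖u‖⁻¹ u
    rw [hTx, hsm, ← smul_sub]
    rw [norm_smul, Real.norm_eq_abs, abs_of_nonneg (by positivity : (0:ℝ) ≤ ‖u‖⁻¹)]
    have hbound : ‖T u - t • u‖ ≤ 3*t*δ*‖u‖ := by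
      refine lp.norm_le_of_forall_le (by positivity) fun i => ?_
      have hsub : (T u - t • u) i = (T u) i - t * u i := by
        rw [lp.coeFn_sub, Pi.sub_apply, lp.coeFn_smul, Pi.smul_apply, smul_eq_mul]
      rw [hsub, Real.norm_eq_abs]
      exact hfinal i
    have h3tδ : 3*t*δ < ε := by
      have hδle : δ ≤ ε/(4*(t+1)) := by rw [hδdef]; exact min_le_left _ _
      have h1 : 3*t*δ ≤ 3*t*(ε/(4*(t+1))) := by
        apply mul_le_mul_of_nonneg_left hδle (by positivity)
      have h2 : 3*t*(ε/(4*(t+1))) < ε := by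
        have h40 : (0:ℝ) < 4*(t+1) := by positivity
        rw [mul_div_assoc', div_lt_iff₀ h40]
        nlinarith
      linarith
    calc ‖u‖⁻¹ * ‖T u - t • u‖ ≤ ‖u‖⁻¹ * (3*t*δ*‖u‖) :=
          mul_le_mul_of_nonneg_left hbound (by positivity)
      _ = 3*t*δ * (‖u‖⁻¹ * ‖u‖) := by ring
      _ = 3*t*δ := by rw [inv_mul_cancel₀ hnu.ne', mul_one]
      _ < ε := h3tδ




end Cor319

open Cor319 in
/-- **Corollary 3.19.** Let `A = [a(i,j)]` be an infinite bounded non-negative matrix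
and let `T_A` be the max-kernel operator `(T_A x)(i) = sup_j a(i,j) x(j)` on the
positive cone `C = l∞₊` of `l∞`, with `e_j` the standard unit vectors. If
`sup {r_{e_j}(T_A) : j ∈ ℕ} ≤ t ≤ r(T_A)`, then `t ∈ σ_ap(T_A)`. -/
theorem mem_apSpectrum_of_infinite_matrix
    (a : ℕ → ℕ → ℝ) (ha0 : ∀ i j, 0 ≤ a i j) (habdd : ∃ M : ℝ, ∀ i j, a i j ≤ M)
    (T : lp (fun _ : ℕ => ℝ) ⊤ → lp (fun _ : ℕ => ℝ) ⊤)
    (hT : ∀ (x : lp (fun _ : ℕ => ℝ) ⊤) (i : ℕ), (T x) i = ⨆ j : ℕ, a i j * x j)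
    (e : ℕ → lp (fun _ : ℕ => ℝ) ⊤)
    (he : ∀ j i : ℕ, (e j) i = if i = j then (1 : ℝ) else 0)
    (t : ℝ)
    (ht1 : ∀ j : ℕ, localRadius {x : lp (fun _ : ℕ => ℝ) ⊤ | ∀ i, 0 ≤ x i} T (e j) ≤ t)
    (ht2 : t ≤ coneRadius {x : lp (fun _ : ℕ => ℝ) ⊤ | ∀ i, 0 ≤ x i} T) :
    t ∈ apSpectrum {x : lp (fun _ : ℕ => ℝ) ⊤ | ∀ i, 0 ≤ x i} T := by
  classical
  obtain ⟨M, haM'⟩ := habdd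
  set M₁ : ℝ := max M 1 with hM₁def
  have hM₁1 : (1:ℝ) ≤ M₁ := le_max_right _ _
  have haM : ∀ i j, a i j ≤ M₁ := fun i j => le_trans (haM' i j) (le_max_left _ _)
  have heC : ∀ j i, 0 ≤ (e j) i := e_nonneg he
  have henorm : ∀ j, ‖e j‖ = 1 := e_norm he
  have hcM : ∀ j k, ‖T^[k] (e j)‖ ≤ M₁ ^ k := by
    intro j k
    have h := iter_norm_le ha0 haM hT (fun i => heC j i) k
    rwa [henorm j, mul_one, max_eq_left hM₁1] at h
  simp only [localRadius] at ht1
  have hloc : ∀ j, Filter.limsup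
      (fun n : ℕ => ‖T^[n] (e j)‖ ^ ((1:ℝ)/n)) Filter.atTop ≤ t := ht1
  have ht0 : 0 ≤ t := by
    have h1 : 0 ≤ Filter.limsup (fun n : ℕ => ‖T^[n] (e 0)‖ ^ ((1:ℝ)/n)) Filter.atTop :=
      limsup_nonneg' (fun n => Real.rpow_nonneg (norm_nonneg _) _)
        (rpow_base_le (fun n => norm_nonneg _) (hcM 0) hM₁1)
    exact le_trans h1 (hloc 0)
  refine ⟨ht0, fun ε hε => ?_⟩
  rcases eq_or_lt_of_le ht0 with h0 | htpos
  · -- case t = 0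
    obtain ⟨γ, hγdef⟩ : ∃ γ : ℝ, γ = min (ε/2) (1/2) := ⟨_, rfl⟩
    have hγ0 : 0 < γ := by rw [hγdef]; exact lt_min (by positivity) (by norm_num)
    have hγε : γ < ε := by
      rw [hγdef]
      exact lt_of_le_of_lt (min_le_left _ _) (by linarith)
    have hlim0 : Filter.limsup
        (fun n : ℕ => ‖T^[n] (e 0)‖ ^ ((1:ℝ)/n)) Filter.atTop < γ := by
      have h := hloc 0
      rw [← h0] at h
      exact lt_of_le_of_lt h hγ0
    have hev := Filter.eventually_lt_of_limsup_lt hlim0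
      (Filter.isBoundedUnder_of ⟨M₁, rpow_base_le (fun n => norm_nonneg _) (hcM 0) hM₁1⟩)
    obtain ⟨K, hK⟩ := Filter.eventually_atTop.1 hev
    have hdip : ‖T^[K+1] (e 0)‖ < γ^(K+1) :=
      rpow_dip (fun n => norm_nonneg _) (by omega) (hK (K+1) (by omega)) hγ0.le
    have hex : ∃ m : ℕ, ‖T^[m+1] (e 0)‖ ≤ γ * ‖T^[m] (e 0)‖ := by
      by_contra hcon
      push_neg at hcon
      have hind : ∀ m : ℕ, γ^m ≤ ‖T^[m] (e 0)‖ := by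
        intro m
        induction m with
        | zero =>
            rw [pow_zero, Function.iterate_zero_apply, henorm 0]
        | succ m ih =>
            calc γ^(m+1) = γ * γ^m := by ring
              _ ≤ γ * ‖T^[m] (e 0)‖ := mul_le_mul_of_nonneg_left ih hγ0.le
              _ ≤ ‖T^[m+1] (e 0)‖ := (hcon m).le
      linarith [hind (K+1)]
    set m₀ := Nat.find hex with hm₀def
    have hm₀ := Nat.find_spec hex
    have hpos : ∀ m, m ≤ m₀ → 0 < ‖T^[m] (e 0)‖ := by
      intro m
      induction m with
      | zero =>
          intro _
          rw [Function.iterate_zero_apply, henorm 0]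
          exact zero_lt_one
      | succ m ih =>
          intro hm
          have hmlt : m < m₀ := by omega
          have h1 := Nat.find_min hex hmlt
          push_neg at h1
          have h2 := ih (by omega)
          calc (0:ℝ) < γ * ‖T^[m] (e 0)‖ := by positivity
            _ < ‖T^[m+1] (e 0)‖ := h1
    have hcm : 0 < ‖T^[m₀] (e 0)‖ := hpos m₀ le_rfl
    refine ⟨‖T^[m₀] (e 0)‖⁻¹ • T^[m₀] (e 0), ?_, ?_, ?_⟩
    · intro i
      rw [lp.coeFn_smul, Pi.smul_apply, smul_eq_mul]
      exact mul_nonneg (by positivity) (iter_nonneg ha0 haM hT (heC 0) m₀ i)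
    · rw [norm_smul, Real.norm_eq_abs, abs_of_nonneg (by positivity : (0:ℝ) ≤ ‖T^[m₀] (e 0)‖⁻¹),
        inv_mul_cancel₀ hcm.ne']
    · rw [← h0, zero_smul, sub_zero]
      have hTx : T (‖T^[m₀] (e 0)‖⁻¹ • T^[m₀] (e 0))
          = ‖T^[m₀] (e 0)‖⁻¹ • T (T^[m₀] (e 0)) :=
        T_smul_lp ha0 haM hT (by positivity) _
      rw [hTx, ← Function.iterate_succ_apply' T m₀ (e 0), norm_smul, Real.norm_eq_abs,
        abs_of_nonneg (by positivity : (0:ℝ) ≤ ‖T^[m₀] (e 0)‖⁻¹)]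
      calc ‖T^[m₀] (e 0)‖⁻¹ * ‖T^[m₀+1] (e 0)‖
          ≤ ‖T^[m₀] (e 0)‖⁻¹ * (γ * ‖T^[m₀] (e 0)‖) :=
            mul_le_mul_of_nonneg_left hm₀ (by positivity)
        _ = γ := by
            rw [mul_comm γ, ← mul_assoc, inv_mul_cancel₀ hcm.ne', one_mul]
        _ < ε := hγε
  · -- case t > 0
    simp only [coneRadius] at ht2
    have hbddS : ∀ n : ℕ, BddAbove {r : ℝ | ∃ x ∈ {x : lp (fun _ : ℕ => ℝ) ⊤ | ∀ i, 0 ≤ x i},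
        x ≠ 0 ∧ r = ‖(T^[n+1]) x‖ / ‖x‖} := by
      intro n
      refine ⟨M₁^(n+1), ?_⟩
      rintro r ⟨x, hxC, hx0, rfl⟩
      have hxn : 0 < ‖x‖ := norm_pos_iff.2 hx0
      rw [div_le_iff₀ hxn]
      have h := iter_norm_le ha0 haM hT hxC (n+1)
      rwa [max_eq_left hM₁1] at h
    have hneS : ∀ n : ℕ, Set.Nonempty {r : ℝ | ∃ x ∈ {x : lp (fun _ : ℕ => ℝ) ⊤ | ∀ i, 0 ≤ x i},
        x ≠ 0 ∧ r = ‖(T^[n+1]) x‖ / ‖x‖} :=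
      fun n => ⟨_, e 0, fun i => heC 0 i, e_ne_zero he 0, rfl⟩
    have hcnn : ∀ n : ℕ, 0 ≤ coneNorm {x : lp (fun _ : ℕ => ℝ) ⊤ | ∀ i, 0 ≤ x i} (T^[n+1]) := by
      intro n
      simp only [coneNorm]
      refine le_trans (div_nonneg (norm_nonneg (T^[n+1] (e 0))) (norm_nonneg (e 0))) ?_
      exact le_csSup (hbddS n) ⟨e 0, fun i => heC 0 i, e_ne_zero he 0, rfl⟩
    have hpow : ∀ n : ℕ, ∃ x : lp (fun _ : ℕ => ℝ) ⊤,
        (∀ i, 0 ≤ x i) ∧ x ≠ 0 ∧ t^(n+1)/2 * ‖x‖ < ‖T^[n+1] x‖ := by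
      intro n
      have h1 : t ≤ (coneNorm {x : lp (fun _ : ℕ => ℝ) ⊤ | ∀ i, 0 ≤ x i} (T^[n+1]))
          ^ ((1:ℝ)/((n:ℝ)+1)) := by
        refine le_trans ht2 (ciInf_le ⟨0, ?_⟩ n)
        rintro r ⟨m, rfl⟩
        exact Real.rpow_nonneg (hcnn m) _
      have h2 : t^(n+1) ≤ coneNorm {x : lp (fun _ : ℕ => ℝ) ⊤ | ∀ i, 0 ≤ x i} (T^[n+1]) := by
        have h3 := pow_le_pow_left₀ ht0 h1 (n+1)
        rwa [rpow_cancel (hcnn n) n] at h3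
      have h4 : t^(n+1)/2 < coneNorm {x : lp (fun _ : ℕ => ℝ) ⊤ | ∀ i, 0 ≤ x i} (T^[n+1]) := by
        have := pow_pos htpos (n+1)
        linarith
      simp only [coneNorm] at h4
      obtain ⟨r, hrS, hr⟩ := exists_lt_of_lt_csSup (hneS n) h4
      obtain ⟨x, hxC, hx0, rfl⟩ := hrS
      refine ⟨x, hxC, hx0, ?_⟩
      have hxn : 0 < ‖x‖ := norm_pos_iff.2 hx0
      rwa [lt_div_iff₀ hxn] at hr
    obtain ⟨x, h1, h2, h3⟩ := main_pos ha0 haM hM₁1 hT he htpos hloc hpow hε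
    exact ⟨x, h1, h2, h3⟩
end

section
/- Let C = c₀₊ be the positive cone of the space c₀ of real sequences converging to zero, with the supremum norm, and let T : C → C be the left (backward) shift, T(x_1, x_2, x_3, ...) = (x_2, x_3, x_4, ...). Then r(T) = 1, σ_p(T) = [0,1), and σ_ap(T) = [0,1], where σ_p(T) = {t ≥ 0 : Tx = tx for some x ∈ C with ‖x‖ = 1}. -/
open Filter Topology Bornology Pointwise

variable {X : Type*}

section MyAux

private lemma c0_norm_le (f : ZeroAtInftyContinuousMap ℕ ℝ) {C : ℝ} (hC : 0 ≤ C)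
    (h : ∀ i, |f i| ≤ C) : ‖f‖ ≤ C := by
  rw [← ZeroAtInftyContinuousMap.norm_toBCF_eq_norm]
  exact (BoundedContinuousFunction.norm_le hC).2 h

private lemma c0_le_norm (f : ZeroAtInftyContinuousMap ℕ ℝ) (i : ℕ) : |f i| ≤ ‖f‖ := by
  rw [← ZeroAtInftyContinuousMap.norm_toBCF_eq_norm]
  exact f.toBCF.norm_coe_le_norm i

noncomputable def geomC0 (r : ℝ) (h0 : 0 ≤ r) (h1 : r < 1) : ZeroAtInftyContinuousMap ℕ ℝ :=
  { toFun := fun i => r ^ i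
    continuous_toFun := continuous_of_discreteTopology
    zero_at_infty' := by
      rw [cocompact_eq_atTop]
      exact tendsto_pow_atTop_nhds_zero_of_lt_one h0 h1 }

private lemma geomC0_apply (r : ℝ) (h0 : 0 ≤ r) (h1 : r < 1) (i : ℕ) :
    geomC0 r h0 h1 i = r ^ i := rfl

private lemma geomC0_norm (r : ℝ) (h0 : 0 ≤ r) (h1 : r < 1) : ‖geomC0 r h0 h1‖ = 1 := by
  refine le_antisymm (c0_norm_le _ zero_le_one fun i => ?_) ?_
  · rw [geomC0_apply, abs_of_nonneg (pow_nonneg h0 i)]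
    exact pow_le_one₀ h0 h1.le
  · have := c0_le_norm (geomC0 r h0 h1) 0
    simpa [geomC0_apply] using this

end MyAux

/-- **Example 3.20 (continued).** Let `C = c₀₊` be the positive cone of the space `c₀`
of real null sequences with the supremum norm, and let `T : C → C` be the left
(backward) shift. Then `r(T) = 1`, `σ_p(T) = [0,1)` and `σ_ap(T) = [0,1]`, where
`σ_p(T) = {t ≥ 0 : T x = t x for some x ∈ C, ‖x‖ = 1}`. -/
theorem backwardShift_c0_spectra
    (T : ZeroAtInftyContinuousMap ℕ ℝ → ZeroAtInftyContinuousMap ℕ ℝ)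
    (hT : ∀ (x : ZeroAtInftyContinuousMap ℕ ℝ) (i : ℕ), (T x) i = x (i + 1)) :
    coneRadius {x : ZeroAtInftyContinuousMap ℕ ℝ | ∀ i, 0 ≤ x i} T = 1 ∧
    {t : ℝ | 0 ≤ t ∧ ∃ x : ZeroAtInftyContinuousMap ℕ ℝ,
        (∀ i, 0 ≤ x i) ∧ ‖x‖ = 1 ∧ T x = t • x} = Set.Ico (0 : ℝ) 1 ∧
    apSpectrum {x : ZeroAtInftyContinuousMap ℕ ℝ | ∀ i, 0 ≤ x i} T = Set.Icc (0 : ℝ) 1 := by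
  set C : Set (ZeroAtInftyContinuousMap ℕ ℝ) := {x | ∀ i, 0 ≤ x i} with hC
  have hIter : ∀ (m : ℕ) (x : ZeroAtInftyContinuousMap ℕ ℝ) (i : ℕ),
      (T^[m] x) i = x (i + m) := by
    intro m
    induction m with
    | zero => intro x i; simp
    | succ m ih =>
      intro x i
      rw [Function.iterate_succ_apply, ih, hT, Nat.add_assoc]
  -- geometric elements are eigenvectors
  have hEig : ∀ (r : ℝ) (h0 : 0 ≤ r) (h1 : r < 1),
      T (geomC0 r h0 h1) = r • geomC0 r h0 h1 := by
    intro r h0 h1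
    ext i
    rw [hT]
    simp [geomC0_apply, pow_succ, mul_comm]
  -- norm of iterates applied to geometric element
  have hGeomIterNorm : ∀ (m : ℕ) (r : ℝ) (h0 : 0 ≤ r) (h1 : r < 1),
      ‖T^[m] (geomC0 r h0 h1)‖ = r ^ m := by
    intro m r h0 h1
    refine le_antisymm (c0_norm_le _ (pow_nonneg h0 m) fun i => ?_) ?_
    · rw [hIter, geomC0_apply, abs_of_nonneg (pow_nonneg h0 _), pow_add]
      exact mul_le_of_le_one_left (pow_nonneg h0 m) (pow_le_one₀ h0 h1.le)
    · have := c0_le_norm (T^[m] (geomC0 r h0 h1)) 0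
      rw [hIter, geomC0_apply, zero_add, abs_of_nonneg (pow_nonneg h0 m)] at this
      exact this
  -- membership of ratios r^m in the coneNorm set
  have hMem : ∀ (m : ℕ) (r : ℝ) (h0 : 0 ≤ r) (h1 : r < 1),
      (r ^ m) ∈ {s : ℝ | ∃ x ∈ C, x ≠ 0 ∧ s = ‖T^[m] x‖ / ‖x‖} := by
    intro m r h0 h1
    refine ⟨geomC0 r h0 h1, fun i => pow_nonneg h0 i, ?_, ?_⟩
    · intro h
      have := geomC0_norm r h0 h1
      rw [h] at this
      simp at this
    · rw [hGeomIterNorm, geomC0_norm, div_one]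
  have hUB : ∀ (m : ℕ) (s : ℝ), s ∈ {s : ℝ | ∃ x ∈ C, x ≠ 0 ∧ s = ‖T^[m] x‖ / ‖x‖} →
      s ≤ 1 := by
    rintro m s ⟨x, _, hx0, rfl⟩
    have hxpos : 0 < ‖x‖ := norm_pos_iff.mpr hx0
    rw [div_le_one hxpos]
    refine c0_norm_le _ (norm_nonneg x) fun i => ?_
    rw [hIter]
    exact c0_le_norm x (i + m)
  have hConeNorm : ∀ m : ℕ, coneNorm C (T^[m + 1]) = 1 := by
    intro m
    refine le_antisymm (csSup_le ⟨0, by simpa using hMem (m + 1) 0 le_rfl one_pos⟩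
      (hUB (m + 1))) ?_
    have htend : Tendsto (fun k : ℕ => (1 - 1 / ((k : ℝ) + 1)) ^ (m + 1)) atTop (𝓝 1) := by
      have h1 : Tendsto (fun k : ℕ => 1 - 1 / ((k : ℝ) + 1)) atTop (𝓝 1) := by
        have := (tendsto_one_div_add_atTop_nhds_zero_nat :
          Tendsto (fun n : ℕ => 1 / ((n : ℝ) + 1)) atTop (𝓝 0))
        have := (tendsto_const_nhds (x := (1 : ℝ)) (f := atTop)).sub this
        simpa using this
      have := h1.pow (m + 1)
      simpa using this
    refine le_of_tendsto' htend fun k => ?_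
    have hr0 : (0 : ℝ) ≤ 1 - 1 / ((k : ℝ) + 1) := by
      have : 1 / ((k : ℝ) + 1) ≤ 1 := by
        rw [div_le_one (by positivity)]
        linarith [Nat.cast_nonneg (α := ℝ) k]
      linarith
    have hr1 : 1 - 1 / ((k : ℝ) + 1) < 1 := by
      have : 0 < 1 / ((k : ℝ) + 1) := by positivity
      linarith
    exact le_csSup ⟨1, hUB (m + 1)⟩ (hMem (m + 1) _ hr0 hr1)
  refine ⟨?_, ?_, ?_⟩
  · -- cone radius
    unfold coneRadius
    have : ∀ n : ℕ, (coneNorm C (T^[n + 1])) ^ ((1 : ℝ) / (n + 1)) = 1 := by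
      intro n
      rw [hConeNorm n, Real.one_rpow]
    simp only [this]
    exact ciInf_const
  · -- point spectrum
    ext t
    simp only [Set.mem_setOf_eq, Set.mem_Ico]
    constructor
    · rintro ⟨ht0, x, hxC, hx1, heig⟩
      refine ⟨ht0, ?_⟩
      by_contra h
      push_neg at h
      have hx : ∀ i, x i = t ^ i * x 0 := by
        intro i
        induction i with
        | zero => simp
        | succ i ih =>
          have : x (i + 1) = (T x) i := (hT x i).symm
          rw [this, heig]
          simp only [ZeroAtInftyContinuousMap.coe_smul, Pi.smul_apply, smul_eq_mul]
          rw [ih, pow_succ]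
          ring
      have hx0pos : 0 < x 0 := by
        rcases lt_or_eq_of_le (hxC 0) with h' | h'
        · exact h'
        · exfalso
          have : x = 0 := by
            ext i
            rw [hx i, ← h', mul_zero]
            rfl
          rw [this, norm_zero] at hx1
          exact one_ne_zero hx1.symm
      have hlim : Tendsto (fun i : ℕ => x i) atTop (𝓝 0) := by
        have := zero_at_infty x
        rwa [cocompact_eq_atTop] at this
      have : x 0 ≤ 0 := by
        refine ge_of_tendsto' hlim fun i => ?_
        rw [hx i]
        have : (1 : ℝ) ≤ t ^ i := one_le_pow₀ h
        nlinarith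
      linarith
    · rintro ⟨ht0, ht1⟩
      exact ⟨ht0, geomC0 t ht0 ht1, fun i => pow_nonneg ht0 i, geomC0_norm t ht0 ht1,
        hEig t ht0 ht1⟩
  · -- approximate point spectrum
    ext s
    simp only [apSpectrum, Set.mem_setOf_eq, Set.mem_Icc]
    constructor
    · rintro ⟨hs0, h⟩
      refine ⟨hs0, ?_⟩
      by_contra hs
      push_neg at hs
      obtain ⟨x, hxC, hx1, hlt⟩ := h ((s - 1) / 2) (by linarith)
      set δ : ℝ := (s - 1) / (2 * s) with hδ
      have hδpos : 0 < δ := div_pos (by linarith) (by linarith)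
      have hδlt : δ < 1 / 2 := by
        rw [hδ, div_lt_div_iff₀ (by linarith) (by norm_num)]
        linarith
      have hi : ∃ i, 1 - δ < x i := by
        by_contra hc
        push_neg at hc
        have : ‖x‖ ≤ 1 - δ := by
          refine c0_norm_le _ (by linarith) fun i => ?_
          rw [abs_of_nonneg (hxC i)]
          exact hc i
        rw [hx1] at this
        linarith
      obtain ⟨i, hi⟩ := hi
      have hxi1 : x (i + 1) ≤ 1 := by
        have := c0_le_norm x (i + 1)
        rw [hx1, abs_of_nonneg (hxC (i + 1))] at this
        exact this
      have key : s * x i - x (i + 1) ≤ ‖T x - s • x‖ := by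
        have h1 := c0_le_norm (T x - s • x) i
        have h2 : (T x - s • x) i = x (i + 1) - s * x i := by
          simp [hT]
        rw [h2] at h1
        calc s * x i - x (i + 1) = -(x (i + 1) - s * x i) := by ring
          _ ≤ |x (i + 1) - s * x i| := neg_le_abs _
          _ ≤ ‖T x - s • x‖ := h1
      have : s * (1 - δ) ≤ s * x i := by nlinarith
      have hfinal : s * (1 - δ) - 1 ≤ ‖T x - s • x‖ := by linarith
      have hval : s * (1 - δ) - 1 = (s - 1) / 2 := by
        rw [hδ]
        field_simp
        ring
      rw [hval] at hfinal
      linarith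
    · rintro ⟨hs0, hs1⟩
      refine ⟨hs0, fun ε hε => ?_⟩
      rcases lt_or_eq_of_le hs1 with h | h
      · refine ⟨geomC0 s hs0 h, fun i => pow_nonneg hs0 i, geomC0_norm s hs0 h, ?_⟩
        rw [hEig s hs0 h, sub_self, norm_zero]
        exact hε
      · subst h
        set r : ℝ := 1 - min ε 1 / 2 with hr
        have hmin : 0 < min ε 1 := lt_min hε one_pos
        have hr0 : 0 ≤ r := by
          have : min ε 1 ≤ 1 := min_le_right _ _
          rw [hr]; linarith
        have hr1 : r < 1 := by rw [hr]; linarith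
        refine ⟨geomC0 r hr0 hr1, fun i => pow_nonneg hr0 i, geomC0_norm r hr0 hr1, ?_⟩
        have hb : ‖T (geomC0 r hr0 hr1) - (1 : ℝ) • geomC0 r hr0 hr1‖ ≤ 1 - r := by
          refine c0_norm_le _ (by linarith) fun i => ?_
          have h2 : (T (geomC0 r hr0 hr1) - (1 : ℝ) • geomC0 r hr0 hr1) i
              = r ^ (i + 1) - r ^ i := by
            simp [hT, geomC0_apply]
          rw [h2, pow_succ]
          have hpl : r ^ i ≤ 1 := pow_le_one₀ hr0 hr1.le
          have hpn : 0 ≤ r ^ i := pow_nonneg hr0 i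
          rw [abs_of_nonpos (by nlinarith)]
          nlinarith
        have : 1 - r < ε := by
          rw [hr]
          have : min ε 1 ≤ ε := min_le_left _ _
          linarith
        linarith
end
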